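/- Let f and g be complex-valued sequences of the same length with unimodular terms, and define the autocorrelation demerit factor DF(f) = (∑_{s≠0} |C_{f,f}(s)|²)/|C_{f,f}(0)|² and the crosscorrelation demerit factor CDF(f,g) = (∑_{s∈ℤ} |C_{f,g}(s)|²)/(|C_{f,f}(0)|·|C_{g,g}(0)|), where C_{f,g}(s) = ∑_{j∈ℤ} f_j·conj(g_{j+s}) with sequences extended by zero. Then 1 - √(DF(f)·DF(g)) ≤ CDF(f,g) ≤ 1 + √(DF(f)·DF(g)). -/

import Mathlib

open Finset Complex

namespace PS19

variable (ℓ : ℕ) (u v : ℤ → ℂ)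

noncomputable def Cf (u v : ℤ → ℂ) (s : ℤ) : ℂ := ∑' j : ℤ, u j * (starRingEnd ℂ) (v (j + s))

variable {ℓ u v}

lemma C_eq_sum (hu : ∀ j : ℤ, j < 0 ∨ (ℓ : ℤ) ≤ j → u j = 0) (s : ℤ) :
    Cf u v s = ∑ j ∈ Finset.Ico (0 : ℤ) (ℓ : ℤ), u j * (starRingEnd ℂ) (v (j + s)) := by
  refine tsum_eq_sum fun j hj => ?_
  rw [Finset.mem_Ico, not_and_or, not_le, not_lt] at hj
  rw [hu j hj, zero_mul]

lemma C_zero_of (hu : ∀ j : ℤ, j < 0 ∨ (ℓ : ℤ) ≤ j → u j = 0)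
    (hv : ∀ j : ℤ, j < 0 ∨ (ℓ : ℤ) ≤ j → v j = 0)
    {s : ℤ} (hs : s ∉ Finset.Ioo (-(ℓ : ℤ)) (ℓ : ℤ)) : Cf u v s = 0 := by
  rw [Finset.mem_Ioo, not_and_or, not_lt, not_lt] at hs
  have h0 : ∀ j : ℤ, u j * (starRingEnd ℂ) (v (j + s)) = 0 := by
    intro j
    rcases hs with hs | hs
    · rcases lt_or_ge j (ℓ : ℤ) with hj | hj
      · rw [hv (j + s) (Or.inl (by omega)), map_zero, mul_zero]
      · rw [hu j (Or.inr hj), zero_mul]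
    · rcases lt_or_ge j 0 with hj | hj
      · rw [hu j (Or.inl hj), zero_mul]
      · rw [hv (j + s) (Or.inr (by omega)), map_zero, mul_zero]
  calc Cf u v s = ∑' _ : ℤ, (0 : ℂ) := tsum_congr h0
    _ = 0 := tsum_zero

lemma C_self_zero (hu : ∀ j : ℤ, j < 0 ∨ (ℓ : ℤ) ≤ j → u j = 0)
    (huni : ∀ j : ℤ, 0 ≤ j → j < (ℓ : ℤ) → ‖u j‖ = 1) :
    Cf u u 0 = (ℓ : ℂ) := by
  rw [C_eq_sum hu]
  have : ∀ j ∈ Finset.Ico (0 : ℤ) (ℓ : ℤ), u j * (starRingEnd ℂ) (u (j + 0)) = 1 := by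
    intro j hj
    rw [Finset.mem_Ico] at hj
    rw [add_zero, Complex.mul_conj, Complex.normSq_eq_norm_sq, huni j hj.1 hj.2]
    norm_num
  rw [Finset.sum_congr rfl this, Finset.sum_const, nsmul_eq_mul, mul_one]
  norm_num [Int.toNat_natCast]

end PS19

namespace PS19

variable {ℓ : ℕ} {f g : ℤ → ℂ}

lemma inner1 (hg : ∀ j : ℤ, j < 0 ∨ (ℓ : ℤ) ≤ j → g j = 0)
    {j k : ℤ} (hj : j ∈ Finset.Ico (0 : ℤ) (ℓ : ℤ)) :
    ∑ s ∈ Finset.Ioo (-(ℓ : ℤ)) (ℓ : ℤ), (starRingEnd ℂ) (g (j + s)) * g (k + s)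
      = (starRingEnd ℂ) (Cf g g (k - j)) := by
  rw [Finset.mem_Ico] at hj
  set h : ℤ → ℂ := fun a => (starRingEnd ℂ) (g a) * g (a + (k - j)) with hh
  have step1 : ∀ s : ℤ, h (j + s) = (starRingEnd ℂ) (g (j + s)) * g (k + s) := by
    intro s
    simp only [hh]
    congr 2
    ring
  have step2 : ∑ s ∈ Finset.Ioo (-(ℓ : ℤ)) (ℓ : ℤ), h (j + s) = ∑' s : ℤ, h (j + s) := by
    refine (tsum_eq_sum fun s hs => ?_).symm
    rw [Finset.mem_Ioo, not_and_or, not_lt, not_lt] at hs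
    have : g (j + s) = 0 := by
      rcases hs with hs | hs
      · exact hg _ (Or.inl (by omega))
      · exact hg _ (Or.inr (by omega))
    simp only [hh, this, map_zero, zero_mul]
  have step3 : ∑' s : ℤ, h (j + s) = ∑' a : ℤ, h a := Equiv.tsum_eq (Equiv.addLeft j) h
  have step4 : ∑' a : ℤ, h a = ∑ a ∈ Finset.Ico (0 : ℤ) (ℓ : ℤ), h a := by
    refine tsum_eq_sum fun a ha => ?_
    rw [Finset.mem_Ico, not_and_or, not_le, not_lt] at ha
    simp only [hh, hg a ha, map_zero, zero_mul]
  have step5 : ∑ a ∈ Finset.Ico (0 : ℤ) (ℓ : ℤ), h a = (starRingEnd ℂ) (Cf g g (k - j)) := by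
    rw [C_eq_sum hg, map_sum]
    refine Finset.sum_congr rfl fun a _ => ?_
    simp only [hh, map_mul, Complex.conj_conj]
  calc ∑ s ∈ Finset.Ioo (-(ℓ : ℤ)) (ℓ : ℤ), (starRingEnd ℂ) (g (j + s)) * g (k + s)
      = ∑ s ∈ Finset.Ioo (-(ℓ : ℤ)) (ℓ : ℤ), h (j + s) :=
        Finset.sum_congr rfl fun s _ => (step1 s).symm
    _ = (starRingEnd ℂ) (Cf g g (k - j)) := by rw [step2, step3, step4, step5]

lemma inner2 (hf : ∀ j : ℤ, j < 0 ∨ (ℓ : ℤ) ≤ j → f j = 0)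
    {j : ℤ} (hj : j ∈ Finset.Ico (0 : ℤ) (ℓ : ℤ)) (w : ℤ → ℂ) :
    ∑ t ∈ Finset.Ioo (-(ℓ : ℤ)) (ℓ : ℤ), (starRingEnd ℂ) (f (j + t)) * w t
      = ∑ k ∈ Finset.Ico (0 : ℤ) (ℓ : ℤ), (starRingEnd ℂ) (f k) * w (k - j) := by
  rw [Finset.mem_Ico] at hj
  set h : ℤ → ℂ := fun a => (starRingEnd ℂ) (f a) * w (a - j) with hh
  have step1 : ∀ t : ℤ, h (j + t) = (starRingEnd ℂ) (f (j + t)) * w t := by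
    intro t
    simp only [hh]
    congr 2
    ring
  have step2 : ∑ t ∈ Finset.Ioo (-(ℓ : ℤ)) (ℓ : ℤ), h (j + t) = ∑' t : ℤ, h (j + t) := by
    refine (tsum_eq_sum fun t ht => ?_).symm
    rw [Finset.mem_Ioo, not_and_or, not_lt, not_lt] at ht
    have : f (j + t) = 0 := by
      rcases ht with ht | ht
      · exact hf _ (Or.inl (by omega))
      · exact hf _ (Or.inr (by omega))
    simp only [hh, this, map_zero, zero_mul]
  have step3 : ∑' t : ℤ, h (j + t) = ∑' a : ℤ, h a := Equiv.tsum_eq (Equiv.addLeft j) h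
  have step4 : ∑' a : ℤ, h a = ∑ a ∈ Finset.Ico (0 : ℤ) (ℓ : ℤ), h a := by
    refine tsum_eq_sum fun a ha => ?_
    rw [Finset.mem_Ico, not_and_or, not_le, not_lt] at ha
    simp only [hh, hf a ha, map_zero, zero_mul]
  calc ∑ t ∈ Finset.Ioo (-(ℓ : ℤ)) (ℓ : ℤ), (starRingEnd ℂ) (f (j + t)) * w t
      = ∑ t ∈ Finset.Ioo (-(ℓ : ℤ)) (ℓ : ℤ), h (j + t) :=
        Finset.sum_congr rfl fun t _ => (step1 t).symm
    _ = ∑ a ∈ Finset.Ico (0 : ℤ) (ℓ : ℤ), h a := by rw [step2, step3, step4]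

end PS19

namespace PS19

variable {ℓ : ℕ} {f g : ℤ → ℂ}

lemma key (hf : ∀ j : ℤ, j < 0 ∨ (ℓ : ℤ) ≤ j → f j = 0)
    (hg : ∀ j : ℤ, j < 0 ∨ (ℓ : ℤ) ≤ j → g j = 0) :
    ∑ s ∈ Finset.Ioo (-(ℓ : ℤ)) (ℓ : ℤ), Cf f g s * (starRingEnd ℂ) (Cf f g s)
      = ∑ t ∈ Finset.Ioo (-(ℓ : ℤ)) (ℓ : ℤ), Cf f f t * (starRingEnd ℂ) (Cf g g t) := by
  set J := Finset.Ico (0 : ℤ) (ℓ : ℤ) with hJ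
  set S := Finset.Ioo (-(ℓ : ℤ)) (ℓ : ℤ) with hS
  have conjC : ∀ s : ℤ, (starRingEnd ℂ) (Cf f g s)
      = ∑ k ∈ J, (starRingEnd ℂ) (f k) * g (k + s) := by
    intro s
    rw [C_eq_sum hf, map_sum]
    refine Finset.sum_congr rfl fun k _ => ?_
    rw [map_mul, Complex.conj_conj]
  have lhs_eq : ∑ s ∈ S, Cf f g s * (starRingEnd ℂ) (Cf f g s)
      = ∑ j ∈ J, ∑ k ∈ J, f j * (starRingEnd ℂ) (f k) * (starRingEnd ℂ) (Cf g g (k - j)) := by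
    calc ∑ s ∈ S, Cf f g s * (starRingEnd ℂ) (Cf f g s)
        = ∑ s ∈ S, ∑ j ∈ J, ∑ k ∈ J,
            (f j * (starRingEnd ℂ) (g (j + s))) * ((starRingEnd ℂ) (f k) * g (k + s)) := by
          refine Finset.sum_congr rfl fun s _ => ?_
          rw [conjC, C_eq_sum hf, Finset.sum_mul_sum]
      _ = ∑ j ∈ J, ∑ k ∈ J, ∑ s ∈ S,
            (f j * (starRingEnd ℂ) (g (j + s))) * ((starRingEnd ℂ) (f k) * g (k + s)) := by
          rw [Finset.sum_comm]
          exact Finset.sum_congr rfl fun j _ => Finset.sum_comm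
      _ = ∑ j ∈ J, ∑ k ∈ J, (f j * (starRingEnd ℂ) (f k)) *
            ∑ s ∈ S, (starRingEnd ℂ) (g (j + s)) * g (k + s) := by
          refine Finset.sum_congr rfl fun j _ => Finset.sum_congr rfl fun k _ => ?_
          rw [Finset.mul_sum]
          exact Finset.sum_congr rfl fun s _ => by ring
      _ = ∑ j ∈ J, ∑ k ∈ J, f j * (starRingEnd ℂ) (f k) * (starRingEnd ℂ) (Cf g g (k - j)) := by
          refine Finset.sum_congr rfl fun j hj => Finset.sum_congr rfl fun k _ => ?_
          rw [inner1 hg hj]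
  have rhs_eq : ∑ t ∈ S, Cf f f t * (starRingEnd ℂ) (Cf g g t)
      = ∑ j ∈ J, ∑ k ∈ J, f j * (starRingEnd ℂ) (f k) * (starRingEnd ℂ) (Cf g g (k - j)) := by
    calc ∑ t ∈ S, Cf f f t * (starRingEnd ℂ) (Cf g g t)
        = ∑ t ∈ S, ∑ j ∈ J, f j * ((starRingEnd ℂ) (f (j + t)) * (starRingEnd ℂ) (Cf g g t)) := by
          refine Finset.sum_congr rfl fun t _ => ?_
          rw [C_eq_sum hf, Finset.sum_mul]
          exact Finset.sum_congr rfl fun j _ => by ring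
      _ = ∑ j ∈ J, f j * ∑ t ∈ S, (starRingEnd ℂ) (f (j + t)) * (starRingEnd ℂ) (Cf g g t) := by
          rw [Finset.sum_comm]
          exact Finset.sum_congr rfl fun j _ => (Finset.mul_sum _ _ _).symm
      _ = ∑ j ∈ J, f j * ∑ k ∈ J, (starRingEnd ℂ) (f k) * (starRingEnd ℂ) (Cf g g (k - j)) := by
          refine Finset.sum_congr rfl fun j hj => ?_
          rw [inner2 hf hj (fun t => (starRingEnd ℂ) (Cf g g t))]
      _ = ∑ j ∈ J, ∑ k ∈ J, f j * (starRingEnd ℂ) (f k) * (starRingEnd ℂ) (Cf g g (k - j)) := by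
          refine Finset.sum_congr rfl fun j _ => ?_
          rw [Finset.mul_sum]
          exact Finset.sum_congr rfl fun k _ => by ring
  rw [lhs_eq, rhs_eq]

end PS19

namespace PS19

variable {ℓ : ℕ} {u : ℤ → ℂ}

lemma tsum_ne_zero_eq (hu : ∀ j : ℤ, j < 0 ∨ (ℓ : ℤ) ≤ j → u j = 0) :
    ∑' s : {s : ℤ // s ≠ 0}, ‖Cf u u (s : ℤ)‖ ^ 2
      = ∑ s ∈ (Finset.Ioo (-(ℓ : ℤ)) (ℓ : ℤ)).erase 0, ‖Cf u u s‖ ^ 2 := by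
  have h1 : ∑' s : {s : ℤ // s ≠ 0}, ‖Cf u u (s : ℤ)‖ ^ 2
      = ∑' s : ℤ, Set.indicator {s : ℤ | s ≠ 0} (fun s => ‖Cf u u s‖ ^ 2) s :=
    tsum_subtype {s : ℤ | s ≠ 0} (fun s => ‖Cf u u s‖ ^ 2)
  rw [h1]
  rw [tsum_eq_sum (s := (Finset.Ioo (-(ℓ : ℤ)) (ℓ : ℤ)).erase 0) ?_]
  · refine Finset.sum_congr rfl fun s hs => ?_
    have hs0 : s ≠ 0 := (Finset.mem_erase.mp hs).1
    exact Set.indicator_of_mem (show s ∈ {s : ℤ | s ≠ 0} from hs0) (fun s => ‖Cf u u s‖ ^ 2)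
  · intro s hs
    rcases eq_or_ne s 0 with rfl | hs0
    · simp
    · rw [Set.indicator_of_mem (show s ∈ {s : ℤ | s ≠ 0} from hs0) (fun s => ‖Cf u u s‖ ^ 2)]
      have : s ∉ Finset.Ioo (-(ℓ : ℤ)) (ℓ : ℤ) := fun hmem =>
        hs (Finset.mem_erase.mpr ⟨hs0, hmem⟩)
      rw [C_zero_of hu hu this]
      simp

end PS19


/-- Pursley–Sarwate bound: for unimodular sequences `f, g` of the same length `ℓ ≥ 1`
(extended by zero outside `{0,...,ℓ-1}`), with aperiodic crosscorrelation
`C_{u,v}(s) = ∑_j u j * conj (v (j+s))`, autocorrelation demerit factor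
`DF(u) = (∑_{s≠0} |C_{u,u}(s)|²)/|C_{u,u}(0)|²` and crosscorrelation demerit factor
`CDF(f,g) = (∑_s |C_{f,g}(s)|²)/(|C_{f,f}(0)|·|C_{g,g}(0)|)`, one has
`1 - √(DF(f)·DF(g)) ≤ CDF(f,g) ≤ 1 + √(DF(f)·DF(g))`. -/
theorem stmt_19 (ℓ : ℕ) (hℓ : 1 ≤ ℓ) (f g : ℤ → ℂ)
    (hfuni : ∀ j : ℤ, 0 ≤ j → j < (ℓ : ℤ) → ‖f j‖ = 1)
    (hguni : ∀ j : ℤ, 0 ≤ j → j < (ℓ : ℤ) → ‖g j‖ = 1)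
    (hfz : ∀ j : ℤ, j < 0 ∨ (ℓ : ℤ) ≤ j → f j = 0)
    (hgz : ∀ j : ℤ, j < 0 ∨ (ℓ : ℤ) ≤ j → g j = 0) :
    let C : (ℤ → ℂ) → (ℤ → ℂ) → ℤ → ℂ :=
      fun u v s => ∑' j : ℤ, u j * (starRingEnd ℂ) (v (j + s))
    let DF : (ℤ → ℂ) → ℝ := fun u =>
      (∑' s : {s : ℤ // s ≠ 0}, ‖C u u (s : ℤ)‖ ^ 2) /
        ‖C u u 0‖ ^ 2
    let CDF : ℝ := (∑' s : ℤ, ‖C f g s‖ ^ 2) /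
      (‖C f f 0‖ * ‖C g g 0‖)
    1 - Real.sqrt (DF f * DF g) ≤ CDF ∧ CDF ≤ 1 + Real.sqrt (DF f * DF g) := by
  intro C DF CDF
  have hC : C = PS19.Cf := rfl
  set S := Finset.Ioo (-(ℓ : ℤ)) (ℓ : ℤ) with hSdef
  have h0S : (0 : ℤ) ∈ S := by
    rw [hSdef, Finset.mem_Ioo]
    constructor <;> omega
  have hlpos : (0 : ℝ) < (ℓ : ℝ) := by exact_mod_cast hℓ
  -- values at 0
  have hff0 : PS19.Cf f f 0 = (ℓ : ℂ) := PS19.C_self_zero hfz hfuni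
  have hgg0 : PS19.Cf g g 0 = (ℓ : ℂ) := PS19.C_self_zero hgz hguni
  have habsf : ‖PS19.Cf f f 0‖ = (ℓ : ℝ) := by
    rw [hff0, Complex.norm_natCast]
  have habsg : ‖PS19.Cf g g 0‖ = (ℓ : ℝ) := by
    rw [hgg0, Complex.norm_natCast]
  -- finite sums
  set L := ∑ s ∈ S, ‖PS19.Cf f g s‖ ^ 2 with hLdef
  set Pf := ∑ s ∈ S.erase 0, ‖PS19.Cf f f s‖ ^ 2 with hPfdef
  set Pg := ∑ s ∈ S.erase 0, ‖PS19.Cf g g s‖ ^ 2 with hPgdef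
  have hPf0 : 0 ≤ Pf := Finset.sum_nonneg fun _ _ => sq_nonneg _
  have hPg0 : 0 ≤ Pg := Finset.sum_nonneg fun _ _ => sq_nonneg _
  have hLsum : (∑' s : ℤ, ‖PS19.Cf f g s‖ ^ 2) = L := by
    refine tsum_eq_sum fun s hs => ?_
    rw [PS19.C_zero_of hfz hgz hs]
    simp
  -- the identity
  set E := ∑ t ∈ S.erase 0, PS19.Cf f f t * (starRingEnd ℂ) (PS19.Cf g g t) with hEdef
  have hkey : (L : ℂ) = (ℓ : ℂ) * (ℓ : ℂ) + E := by
    have k := PS19.key hfz hgz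
    have lhs : ∑ s ∈ S, PS19.Cf f g s * (starRingEnd ℂ) (PS19.Cf f g s) = (L : ℂ) := by
      rw [hLdef, Complex.ofReal_sum]
      refine Finset.sum_congr rfl fun s _ => ?_
      rw [Complex.mul_conj, Complex.normSq_eq_norm_sq]
    have rhs : ∑ t ∈ S, PS19.Cf f f t * (starRingEnd ℂ) (PS19.Cf g g t)
        = (ℓ : ℂ) * (ℓ : ℂ) + E := by
      rw [← Finset.add_sum_erase _ _ h0S, hff0, hgg0, Complex.conj_natCast]
    rw [← lhs, k, rhs]
  have hre : L = (ℓ : ℝ) * (ℓ : ℝ) + E.re := by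
    have := congrArg Complex.re hkey
    simpa using this
  -- Cauchy-Schwarz bound
  have hEbound : |E.re| ≤ Real.sqrt (Pf * Pg) := by
    have h1 : |E.re| ≤ ‖E‖ := Complex.abs_re_le_norm E
    have h2 : ‖E‖
        ≤ ∑ t ∈ S.erase 0, ‖PS19.Cf f f t‖ * ‖PS19.Cf g g t‖ := by
      refine (norm_sum_le _ _).trans ?_
      refine le_of_eq (Finset.sum_congr rfl fun t _ => ?_)
      rw [norm_mul, Complex.norm_conj]
    have h3 : (∑ t ∈ S.erase 0, ‖PS19.Cf f f t‖ * ‖PS19.Cf g g t‖)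
        ≤ Real.sqrt (Pf * Pg) := by
      rw [Real.le_sqrt (Finset.sum_nonneg fun _ _ =>
        mul_nonneg (norm_nonneg _) (norm_nonneg _)) (mul_nonneg hPf0 hPg0)]
      exact Finset.sum_mul_sq_le_sq_mul_sq _ _ _
    linarith
  -- expressing DF and CDF
  have hCDF : CDF = L / ((ℓ : ℝ) * (ℓ : ℝ)) := by
    show (∑' s : ℤ, ‖C f g s‖ ^ 2) /
      (‖C f f 0‖ * ‖C g g 0‖) = L / ((ℓ : ℝ) * (ℓ : ℝ))
    rw [hC, hLsum, habsf, habsg]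
  have hDFf : DF f = Pf / ((ℓ : ℝ) * (ℓ : ℝ)) := by
    show (∑' s : {s : ℤ // s ≠ 0}, ‖C f f (s : ℤ)‖ ^ 2) /
      ‖C f f 0‖ ^ 2 = Pf / ((ℓ : ℝ) * (ℓ : ℝ))
    rw [hC, PS19.tsum_ne_zero_eq hfz, habsf, sq]
  have hDFg : DF g = Pg / ((ℓ : ℝ) * (ℓ : ℝ)) := by
    show (∑' s : {s : ℤ // s ≠ 0}, ‖C g g (s : ℤ)‖ ^ 2) /
      ‖C g g 0‖ ^ 2 = Pg / ((ℓ : ℝ) * (ℓ : ℝ))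
    rw [hC, PS19.tsum_ne_zero_eq hgz, habsg, sq]
  have hD : Real.sqrt (DF f * DF g) = Real.sqrt (Pf * Pg) / ((ℓ : ℝ) * (ℓ : ℝ)) := by
    rw [hDFf, hDFg]
    rw [div_mul_div_comm, Real.sqrt_div (mul_nonneg hPf0 hPg0),
      Real.sqrt_mul_self (by positivity)]
  -- finish
  have hll : (0 : ℝ) < (ℓ : ℝ) * (ℓ : ℝ) := by positivity
  rw [hCDF, hD, hre]
  have hb := abs_le.mp hEbound
  have hsplit : ((ℓ : ℝ) * (ℓ : ℝ) + E.re) / ((ℓ : ℝ) * (ℓ : ℝ))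
      = 1 + E.re / ((ℓ : ℝ) * (ℓ : ℝ)) := by
    field_simp
  have h1 : E.re / ((ℓ : ℝ) * (ℓ : ℝ)) ≤ Real.sqrt (Pf * Pg) / ((ℓ : ℝ) * (ℓ : ℝ)) := by
    gcongr
    exact hb.2
  have h2 : -(Real.sqrt (Pf * Pg) / ((ℓ : ℝ) * (ℓ : ℝ))) ≤ E.re / ((ℓ : ℝ) * (ℓ : ℝ)) := by
    rw [← neg_div]
    gcongr
    exact hb.1
  constructor
  · rw [hsplit]; linarith
  · rw [hsplit]; linarith
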